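/- Let N ≥ 3 and let M be any matrix of the uni-modular ensemble with phases Φ. Set W = M/(2√(N−2)) and y_n(Φ) = Tr[Y(Φ)^n]/(N (N−2)^{n/2}). Then for every positive integer n: y_n(Φ) = (2/N) Tr[T_n(W)] + ((N−3)/2) · (1 + (−1)^n)/(N−2)^{n/2}, where T_n is the n-th Chebyshev polynomial of the first kind. -/

import Mathlib

open MeasureTheory Matrix

noncomputable section

/-- The uniform probability measure on `[0, 2π)`. -/
def uniformPhase : Measure ℝ :=
  (ENNReal.ofReal (2 * Real.pi))⁻¹ • volume.restrict (Set.Ico 0 (2 * Real.pi))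

/-- Product measure: the phases `ω μ ν` (used for `μ < ν`) are i.i.d. uniform on `[0, 2π)`. -/
def phaseMeasure (N : ℕ) : Measure (Fin N → Fin N → ℝ) :=
  Measure.pi fun _ => Measure.pi fun _ => uniformPhase

/-- Antisymmetrized phases built from a raw sample: `φ ν μ = - φ μ ν`, `φ μ μ = 0`. -/
def phases (N : ℕ) (ω : Fin N → Fin N → ℝ) : Fin N → Fin N → ℝ :=
  fun μ ν => if μ < ν then ω μ ν else if ν < μ then - (ω ν μ) else 0

/-- The uni-modular matrix with phases `φ`: zero diagonal, `M μ ν = exp(i φ μ ν)` off diagonal. -/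
def umeMatrix (N : ℕ) (φ : Fin N → Fin N → ℝ) : Matrix (Fin N) (Fin N) ℂ :=
  fun μ ν => if μ = ν then 0 else Complex.exp (Complex.I * (φ μ ν : ℂ))


/-- A directed edge of the complete graph on `N` vertices: a pair `e = (j, i)` with `i ≠ j`;
its origin is `e.2` and its terminus is `e.1`. -/
abbrev DirEdge (N : ℕ) : Type := {e : Fin N × Fin N // e.1 ≠ e.2}

/-- The magnetic Hashimoto matrix of the complete graph on `N` vertices with phases `φ`:
`Y(Φ)_{e',e} = (δ_{o(e'),τ(e)} − δ_{e',ê}) · exp((i/2)(φ_e + φ_{e'}))`. -/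
def hashimoto (N : ℕ) (φ : Fin N → Fin N → ℝ) :
    Matrix (DirEdge N) (DirEdge N) ℂ :=
  fun e' e =>
    (((if e'.1.2 = e.1.1 then 1 else 0) : ℂ) - ((if e'.1 = (e.1.2, e.1.1) then 1 else 0) : ℂ)) *
      Complex.exp (Complex.I / 2 * ((φ e.1.1 e.1.2 : ℂ) + (φ e'.1.1 e'.1.2 : ℂ)))


/-- The scaled UME matrix `W = M / (2√(N−2))`. -/
def scaledUme (N : ℕ) (φ : Fin N → Fin N → ℝ) : Matrix (Fin N) (Fin N) ℂ :=
  ((1 / (2 * Real.sqrt ((N : ℝ) - 2)) : ℝ) : ℂ) • umeMatrix N φ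

/-- `Tr[T_n(W)]`, the trace of the `n`-th Chebyshev polynomial of the first kind evaluated
at the scaled UME matrix `W = M/(2√(N−2))`. -/
def chebTrace (N : ℕ) (φ : Fin N → Fin N → ℝ) (n : ℕ) : ℂ :=
  Matrix.trace (Polynomial.aeval (scaledUme N φ) (Polynomial.Chebyshev.T ℂ n))

namespace HashProof

variable {N : ℕ} (φ : Fin N → Fin N → ℝ)

/-! ### Edge-space matrices -/

def Sd : Matrix (Fin N) (DirEdge N) ℂ :=
  fun v e => if v = e.1.1 then Complex.exp (Complex.I * (φ e.1.1 e.1.2 : ℂ)) else 0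

def Tm : Matrix (Fin N) (DirEdge N) ℂ := fun v e => if v = e.1.2 then 1 else 0

def Qm : Matrix (DirEdge N) (DirEdge N) ℂ :=
  fun e' e => if e'.1 = (e.1.2, e.1.1) then Complex.exp (Complex.I * (φ e.1.1 e.1.2 : ℂ)) else 0

def Bm : Matrix (DirEdge N) (DirEdge N) ℂ := (Tm (N := N))ᵀ * Sd φ - Qm φ

def rev (e : DirEdge N) : DirEdge N := ⟨(e.1.2, e.1.1), Ne.symm e.2⟩

lemma eq_rev_iff (e' e : DirEdge N) : e'.1 = (e.1.2, e.1.1) ↔ e' = rev e := by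
  rw [Subtype.ext_iff]; rfl

lemma sum_dirEdge (f : Fin N × Fin N → ℂ) :
    ∑ e : DirEdge N, f e.1 = ∑ i : Fin N, ∑ j : Fin N, if i = j then 0 else f (i, j) := by
  rw [← Finset.sum_subtype (Finset.univ.filter (fun p : Fin N × Fin N => p.1 ≠ p.2))
      (by simp) (fun p => f p)]
  rw [Finset.sum_filter, Fintype.sum_prod_type]
  refine Finset.sum_congr rfl fun i _ => Finset.sum_congr rfl fun j _ => ?_
  by_cases h : i = j <;> simp [h]

lemma Sd_mul_Tmt : Sd φ * (Tm (N := N))ᵀ = umeMatrix N φ := by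
  ext v w
  rw [Matrix.mul_apply]
  simp only [Sd, Tm, transpose_apply]
  rw [sum_dirEdge (fun p => (if v = p.1 then Complex.exp (Complex.I * (φ p.1 p.2 : ℂ)) else 0) *
      (if w = p.2 then 1 else 0))]
  by_cases hvw : v = w
  · subst hvw
    rw [Finset.sum_eq_zero]
    · simp [umeMatrix]
    intro i _
    rw [Finset.sum_eq_zero]
    intro j _
    by_cases h1 : i = j <;> by_cases h2 : v = i <;> by_cases h3 : v = j <;> simp_all
  · rw [Finset.sum_eq_single v ?_ (by simp)]
    · rw [Finset.sum_eq_single w ?_ (by simp)]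
      · simp [umeMatrix, hvw, Ne.symm hvw]
      · intro j _ hj
        simp [Ne.symm hj]
    · intro i _ hi
      rw [Finset.sum_eq_zero]
      intro j _
      simp [Ne.symm hi]

lemma Tm_mul_Tmt : Tm (N := N) * (Tm (N := N))ᵀ = ((N : ℂ) - 1) • 1 := by
  ext v w
  rw [Matrix.mul_apply]
  simp only [Tm, transpose_apply]
  rw [sum_dirEdge (fun p => (if v = p.2 then (1:ℂ) else 0) * (if w = p.2 then 1 else 0))]
  by_cases hvw : v = w
  · subst hvw
    have h1 : ∀ i j : Fin N, (if i = j then (0:ℂ) else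
        (if v = j then (1:ℂ) else 0) * (if v = j then 1 else 0)) =
        (if v = j then (if i = j then 0 else 1) else 0) := by
      intro i j; by_cases h1 : i = j <;> by_cases h2 : v = j <;> simp [h1, h2]
    simp_rw [h1, Finset.sum_ite_eq, Finset.mem_univ, if_true]
    have h2 : ∀ i : Fin N, (if i = v then (0:ℂ) else 1) = 1 - (if i = v then 1 else 0) := by
      intro i; by_cases h : i = v <;> simp [h]
    simp_rw [h2]
    rw [Finset.sum_sub_distrib]
    simp [Matrix.one_apply]
  · rw [Finset.sum_eq_zero]
    · simp [Matrix.one_apply, hvw]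
    intro i _
    rw [Finset.sum_eq_zero]
    intro j _
    by_cases h1 : i = j <;> by_cases h2 : v = j <;> by_cases h3 : w = j <;> simp_all

lemma exp_rev (hφ : ∀ μ ν, φ ν μ = - φ μ ν) (e : DirEdge N) :
    Complex.exp (Complex.I * (φ e.1.2 e.1.1 : ℂ)) *
      Complex.exp (Complex.I * (φ e.1.1 e.1.2 : ℂ)) = 1 := by
  rw [← Complex.exp_add, hφ]
  push_cast
  ring_nf
  exact Complex.exp_zero

lemma Sd_mul_Qm (hφ : ∀ μ ν, φ ν μ = - φ μ ν) : Sd φ * Qm φ = Tm (N := N) := by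
  ext v e
  rw [Matrix.mul_apply, Fintype.sum_eq_single (rev e)]
  · simp only [Sd, Qm, rev, Tm]
    rw [if_pos trivial]
    by_cases h : v = (e : Fin N × Fin N).2
    · simp only [h, eq_self_iff_true, ↓reduceIte]
      exact exp_rev φ hφ e
    · simp only [h, ↓reduceIte, zero_mul]
  · intro e' he'
    simp only [Qm, eq_rev_iff]
    rw [if_neg he', mul_zero]

lemma Tm_mul_Qm : Tm (N := N) * Qm φ = Sd φ := by
  ext v e
  rw [Matrix.mul_apply, Fintype.sum_eq_single (rev e)]
  · simp only [Tm, Qm, rev, Sd]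
    rw [if_pos trivial]
    by_cases h : v = (e : Fin N × Fin N).1
    · simp only [h, eq_self_iff_true, ↓reduceIte, one_mul]
    · simp only [h, ↓reduceIte, zero_mul]
  · intro e' he'
    simp only [Qm, eq_rev_iff]
    rw [if_neg he', mul_zero]

lemma Qm_mul_Qm (hφ : ∀ μ ν, φ ν μ = - φ μ ν) : Qm φ * Qm φ = 1 := by
  ext e'' e
  rw [Matrix.mul_apply, Fintype.sum_eq_single (rev e)]
  · simp only [Qm, rev, Prod.mk.eta]
    rw [if_pos trivial]
    by_cases h : e''.1 = e.1
    · have he : e'' = e := Subtype.ext h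
      subst he
      rw [if_pos h, Matrix.one_apply_eq]
      exact exp_rev φ hφ _
    · rw [if_neg h, zero_mul, Matrix.one_apply, if_neg]
      exact fun hc => h (congrArg Subtype.val hc)
  · intro e' he'
    simp only [Qm, eq_rev_iff]
    rw [if_neg he', mul_zero]

lemma trace_Qm : Matrix.trace (Qm φ) = 0 := by
  unfold Matrix.trace Qm
  rw [Finset.sum_eq_zero]
  intro e _
  simp only [Matrix.diag]
  rw [if_neg]
  intro h
  exact e.2 (Prod.ext_iff.mp h).1

lemma trace_one_edge :
    Matrix.trace (1 : Matrix (DirEdge N) (DirEdge N) ℂ) = (N : ℂ) * ((N : ℂ) - 1) := by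
  have h : Matrix.trace (1 : Matrix (DirEdge N) (DirEdge N) ℂ) = ∑ e : DirEdge N, (1 : ℂ) := by
    unfold Matrix.trace
    exact Finset.sum_congr rfl fun e _ => by simp [Matrix.diag_apply]
  rw [h, sum_dirEdge (fun _ => (1 : ℂ))]
  have h2 : ∀ i j : Fin N, (if i = j then (0:ℂ) else 1) = 1 - (if i = j then 1 else 0) := by
    intro i j; by_cases h : i = j <;> simp [h]
  simp_rw [h2]
  rw [Finset.sum_congr rfl (fun i _ => Finset.sum_sub_distrib _ _)]
  simp [Finset.sum_ite_eq, mul_comm, mul_sub]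

lemma trace_umeMatrix : Matrix.trace (umeMatrix N φ) = 0 := by
  unfold Matrix.trace umeMatrix
  rw [Finset.sum_eq_zero]
  intro i _
  simp [Matrix.diag]

lemma Bm_apply (e' e : DirEdge N) :
    Bm φ e' e = (((if e'.1.2 = e.1.1 then 1 else 0) : ℂ) -
        ((if e'.1 = (e.1.2, e.1.1) then 1 else 0) : ℂ)) *
      Complex.exp (Complex.I * (φ e.1.1 e.1.2 : ℂ)) := by
  simp only [Bm, Matrix.sub_apply, Matrix.mul_apply, Matrix.transpose_apply, Tm, Sd, Qm]
  rw [Fintype.sum_eq_single ((e' : Fin N × Fin N).2)]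
  · by_cases h1 : (e' : Fin N × Fin N).2 = (e : Fin N × Fin N).1 <;>
      by_cases h2 : (e' : Fin N × Fin N) = ((e : Fin N × Fin N).2, (e : Fin N × Fin N).1) <;>
      simp [h1, h2] <;> ring
  · intro v hv
    rw [if_neg hv, zero_mul]

/-! ### Conjugation to the Hashimoto matrix -/

def Fd : Matrix (DirEdge N) (DirEdge N) ℂ :=
  Matrix.diagonal (fun e : DirEdge N => Complex.exp (Complex.I / 2 * (φ e.1.1 e.1.2 : ℂ)))

def Fdinv : Matrix (DirEdge N) (DirEdge N) ℂ :=
  Matrix.diagonal (fun e : DirEdge N => Complex.exp (-(Complex.I / 2) * (φ e.1.1 e.1.2 : ℂ)))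

lemma Fd_mul_Fdinv : Fd φ * Fdinv φ = 1 := by
  rw [Fd, Fdinv, Matrix.diagonal_mul_diagonal]
  convert Matrix.diagonal_one with e
  rw [← Complex.exp_add]; ring_nf; exact Complex.exp_zero

lemma Fdinv_mul_Fd : Fdinv φ * Fd φ = 1 := by
  rw [Fd, Fdinv, Matrix.diagonal_mul_diagonal]
  convert Matrix.diagonal_one with e
  rw [← Complex.exp_add]; ring_nf; exact Complex.exp_zero

lemma hash_eq_conj : hashimoto N φ = Fd φ * Bm φ * Fdinv φ := by
  ext e' e
  rw [Fdinv, Matrix.mul_diagonal, Fd, Matrix.diagonal_mul, Bm_apply, hashimoto]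
  rw [mul_comm (Complex.exp (Complex.I / 2 * (φ e'.1.1 e'.1.2 : ℂ)))]
  rw [mul_assoc, mul_assoc, ← Complex.exp_add, ← Complex.exp_add]
  congr 2
  ring

lemma trace_hash_pow (n : ℕ) :
    Matrix.trace ((hashimoto N φ) ^ n) = Matrix.trace ((Bm φ) ^ n) := by
  have hu : ∀ (u : (Matrix (DirEdge N) (DirEdge N) ℂ)ˣ) (X : Matrix (DirEdge N) (DirEdge N) ℂ),
      Matrix.trace (((u : Matrix (DirEdge N) (DirEdge N) ℂ) * X *
        (↑u⁻¹ : Matrix (DirEdge N) (DirEdge N) ℂ)) ^ n) = Matrix.trace (X ^ n) := by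
    intro u X
    rw [Units.conj_pow, Matrix.trace_mul_comm, ← Matrix.mul_assoc, u.inv_mul, Matrix.one_mul]
  set u : (Matrix (DirEdge N) (DirEdge N) ℂ)ˣ := ⟨Fd φ, Fdinv φ, Fd_mul_Fdinv φ, Fdinv_mul_Fd φ⟩
  have h2 : hashimoto N φ = (u : Matrix (DirEdge N) (DirEdge N) ℂ) * Bm φ *
      (↑u⁻¹ : Matrix (DirEdge N) (DirEdge N) ℂ) := hash_eq_conj φ
  rw [h2, hu u (Bm φ)]

/-! ### The polynomial sequence `A` -/

def A : ℕ → Matrix (Fin N) (Fin N) ℂ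
  | 0 => 1
  | 1 => umeMatrix N φ
  | (n+2) => umeMatrix N φ * A (n+1) - ((N : ℂ) - 2) • A n

lemma A_rec (n : ℕ) :
    A φ (n+2) = umeMatrix N φ * A φ (n+1) - ((N : ℂ) - 2) • A φ n := by
  simp [A]

lemma commute_A (n : ℕ) : umeMatrix N φ * A φ n = A φ n * umeMatrix N φ := by
  induction n using Nat.twoStepInduction with
  | zero => simp [A]
  | one => simp [A]
  | more k ih1 ih2 =>
    rw [A_rec, Matrix.mul_sub, Matrix.sub_mul, ← Matrix.mul_assoc, ih2, Matrix.mul_assoc,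
      mul_smul_comm, smul_mul_assoc, ih1]
    conv_lhs => rw [ih2]
    rw [← Matrix.mul_assoc, ih2]

/-! ### Intertwining relations -/

lemma Sd_mul_Bm (hφ : ∀ μ ν, φ ν μ = - φ μ ν) :
    Sd φ * Bm φ = umeMatrix N φ * Sd φ - Tm (N := N) := by
  rw [Bm, Matrix.mul_sub, ← Matrix.mul_assoc, Sd_mul_Tmt, Sd_mul_Qm φ hφ]

lemma Tm_mul_Bm (hφ : ∀ μ ν, φ ν μ = - φ μ ν) :
    Tm (N := N) * Bm φ = ((N : ℂ) - 2) • Sd φ := by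
  rw [Bm, Matrix.mul_sub, ← Matrix.mul_assoc, Tm_mul_Tmt, Tm_mul_Qm, Matrix.smul_mul,
    Matrix.one_mul]
  module

lemma U_formula (hφ : ∀ μ ν, φ ν μ = - φ μ ν) (n : ℕ) :
    Sd φ * (Bm φ) ^ (n+1) = A φ (n+1) * Sd φ - A φ n * Tm (N := N) := by
  induction n with
  | zero =>
    rw [pow_one, Sd_mul_Bm φ hφ]
    simp [A]
  | succ k ih =>
    rw [pow_succ, ← Matrix.mul_assoc, ih, Matrix.sub_mul, Matrix.mul_assoc, Matrix.mul_assoc,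
      Sd_mul_Bm φ hφ, Tm_mul_Bm φ hφ, Matrix.mul_sub]
    have hA : A φ (k+2) * Sd φ =
        A φ (k+1) * (umeMatrix N φ * Sd φ) - ((N : ℂ) - 2) • (A φ k * Sd φ) := by
      rw [A_rec, Matrix.sub_mul, Matrix.smul_mul, commute_A, Matrix.mul_assoc]
    rw [hA, Matrix.mul_smul]
    abel

/-! ### Trace recursions -/

lemma trace_MA (n : ℕ) :
    Matrix.trace (umeMatrix N φ * A φ (n+1)) =
      Matrix.trace (A φ (n+2)) + ((N : ℂ) - 2) * Matrix.trace (A φ n) := by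
  rw [A_rec, Matrix.trace_sub, Matrix.trace_smul, smul_eq_mul]
  ring

lemma trace_SBT (hφ : ∀ μ ν, φ ν μ = - φ μ ν) (k : ℕ) :
    Matrix.trace (Sd φ * (Bm φ) ^ (k+1) * (Tm (N := N))ᵀ) =
      Matrix.trace (A φ (k+2)) - Matrix.trace (A φ k) := by
  rw [U_formula φ hφ k, Matrix.sub_mul, Matrix.mul_assoc, Matrix.mul_assoc, Sd_mul_Tmt,
    Tm_mul_Tmt, Matrix.trace_sub, Matrix.trace_mul_comm (A φ (k+1)), trace_MA]
  have h1 : A φ k * (((N : ℂ) - 1) • 1) = ((N : ℂ) - 1) • A φ k := by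
    rw [mul_smul_comm, Matrix.mul_one]
  rw [h1, Matrix.trace_smul, smul_eq_mul]
  ring

lemma trace_SBT0 :
    Matrix.trace (Sd φ * (Bm φ) ^ 0 * (Tm (N := N))ᵀ) = 0 := by
  rw [pow_zero, Matrix.mul_one, Sd_mul_Tmt, trace_umeMatrix]

lemma t_succ (n : ℕ) :
    Matrix.trace ((Bm φ) ^ (n+1)) =
      Matrix.trace (Sd φ * (Bm φ) ^ n * (Tm (N := N))ᵀ) -
        Matrix.trace ((Bm φ) ^ n * Qm φ) := by
  rw [pow_succ]
  nth_rewrite 2 [Bm]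
  rw [Matrix.mul_sub, Matrix.trace_sub]
  congr 1
  rw [← Matrix.mul_assoc, Matrix.trace_mul_comm, ← Matrix.mul_assoc]

lemma r_succ (hφ : ∀ μ ν, φ ν μ = - φ μ ν) (n : ℕ) :
    Matrix.trace ((Bm φ) ^ (n+1) * Qm φ) =
      Matrix.trace (Tm (N := N) * (Bm φ) ^ n * (Tm (N := N))ᵀ) -
        Matrix.trace ((Bm φ) ^ n) := by
  rw [pow_succ, Matrix.mul_assoc]
  have h : Bm φ * Qm φ = (Tm (N := N))ᵀ * Tm (N := N) - 1 := by
    rw [Bm, Matrix.sub_mul, Matrix.mul_assoc, Sd_mul_Qm φ hφ, Qm_mul_Qm φ hφ]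
  rw [h, Matrix.mul_sub, Matrix.mul_one, Matrix.trace_sub]
  congr 1
  rw [← Matrix.mul_assoc, Matrix.trace_mul_comm, ← Matrix.mul_assoc]

lemma TmB_pow (hφ : ∀ μ ν, φ ν μ = - φ μ ν) (k : ℕ) :
    Tm (N := N) * (Bm φ) ^ (k+1) * (Tm (N := N))ᵀ =
      ((N : ℂ) - 2) • (Sd φ * (Bm φ) ^ k * (Tm (N := N))ᵀ) := by
  rw [pow_succ', ← Matrix.mul_assoc, Tm_mul_Bm φ hφ, Matrix.smul_mul, Matrix.smul_mul]

/-- The additive correction term. -/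
def cc (N : ℕ) : ℕ → ℂ := fun n => if Even n then (N : ℂ) * ((N : ℂ) - 3) else 0

lemma cc_add_two (n : ℕ) : cc N (n+2) = cc N n := by
  simp [cc, Nat.even_add]

lemma main_ind (hφ : ∀ μ ν, φ ν μ = - φ μ ν) (m : ℕ) :
    Matrix.trace ((Bm φ) ^ (m+2)) =
        Matrix.trace (A φ (m+2)) - ((N : ℂ) - 2) * Matrix.trace (A φ m) + cc N (m+2)
      ∧ Matrix.trace ((Bm φ) ^ (m+2) * Qm φ) =
        (((N : ℂ) - 2) - 1) * Matrix.trace (A φ (m+1)) - cc N (m+1) := by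
  induction m with
  | zero =>
    have hr1 : Matrix.trace ((Bm φ) ^ 1 * Qm φ) = 0 := by
      rw [r_succ φ hφ 0, pow_zero, Matrix.mul_one, Tm_mul_Tmt,
        Matrix.trace_smul, Matrix.trace_one, trace_one_edge, smul_eq_mul]
      simp only [Fintype.card_fin]
      push_cast
      ring
    have ht1 : Matrix.trace ((Bm φ) ^ 1) = 0 := by
      rw [t_succ φ 0, trace_SBT0, pow_zero, Matrix.one_mul, trace_Qm]
      ring
    constructor
    · rw [t_succ φ 1, trace_SBT φ hφ 0, hr1]
      have hA0 : Matrix.trace (A φ 0) = (N : ℂ) := by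
        show Matrix.trace (1 : Matrix (Fin N) (Fin N) ℂ) = (N : ℂ)
        rw [Matrix.trace_one]
        simp
      rw [hA0]
      simp [cc]
      ring
    · rw [r_succ φ hφ 1, TmB_pow φ hφ 0, Matrix.trace_smul, trace_SBT0, ht1]
      have hA1 : Matrix.trace (A φ 1) = 0 := by
        show Matrix.trace (umeMatrix N φ) = 0
        exact trace_umeMatrix φ
      rw [hA1]
      simp [cc]
  | succ k ih =>
    obtain ⟨iht, ihr⟩ := ih
    constructor
    · rw [t_succ φ (k+2), trace_SBT φ hφ (k+1), ihr, cc_add_two]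
      ring
    · rw [r_succ φ hφ (k+2), TmB_pow φ hφ (k+1), Matrix.trace_smul, trace_SBT φ hφ k, iht,
        smul_eq_mul, cc_add_two]
      ring

lemma trace_Bm_one : Matrix.trace ((Bm φ) ^ 1) = 0 := by
  rw [t_succ φ 0, trace_SBT0, pow_zero, Matrix.one_mul, trace_Qm]
  ring

/-! ### Chebyshev polynomials -/

def sC (N : ℕ) : ℂ := ((Real.sqrt ((N : ℝ) - 2) : ℝ) : ℂ)

lemma sC_sq (hN : 3 ≤ N) : sC N ^ 2 = (N : ℂ) - 2 := by
  have h0 : (0:ℝ) ≤ (N:ℝ) - 2 := by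
    have : (3:ℝ) ≤ (N:ℝ) := by exact_mod_cast hN
    linarith
  rw [sC, ← Complex.ofReal_pow, Real.sq_sqrt h0]
  push_cast
  ring

lemma sC_ne (hN : 3 ≤ N) : sC N ≠ 0 := by
  rw [sC, Ne, Complex.ofReal_eq_zero]
  have h0 : (0:ℝ) < (N:ℝ) - 2 := by
    have : (3:ℝ) ≤ (N:ℝ) := by exact_mod_cast hN
    linarith
  exact ne_of_gt (Real.sqrt_pos.mpr h0)

lemma M_eq (hN : 3 ≤ N) : umeMatrix N φ = (2 * sC N) • scaledUme N φ := by
  rw [scaledUme, smul_smul]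
  have hs : Real.sqrt ((N:ℝ) - 2) ≠ 0 := by
    have := sC_ne (N := N) hN
    rw [sC, Ne, Complex.ofReal_eq_zero] at this
    exact this
  have h1 : (2 * sC N) * ((1 / (2 * Real.sqrt ((N : ℝ) - 2)) : ℝ) : ℂ) = 1 := by
    rw [sC]
    push_cast
    have hs' : (Real.sqrt ((N:ℝ) - 2) : ℂ) ≠ 0 := by
      rwa [Ne, Complex.ofReal_eq_zero]
    field_simp
  rw [h1, one_smul]

def Pch (n : ℕ) : Matrix (Fin N) (Fin N) ℂ :=
  (2 * sC N ^ n) • (Polynomial.aeval (scaledUme N φ) (Polynomial.Chebyshev.T ℂ (n : ℤ)))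

lemma trace_Pch (n : ℕ) : Matrix.trace (Pch φ n) = 2 * sC N ^ n * chebTrace N φ n := by
  rw [Pch, Matrix.trace_smul, smul_eq_mul, chebTrace]

lemma Pch_zero : Pch φ 0 = (2 : ℂ) • (1 : Matrix (Fin N) (Fin N) ℂ) := by
  rw [Pch]
  simp

lemma Pch_one (hN : 3 ≤ N) : Pch φ 1 = umeMatrix N φ := by
  rw [Pch]
  simp only [Nat.cast_one, Polynomial.Chebyshev.T_one, Polynomial.aeval_X, pow_one]
  rw [M_eq φ hN]

lemma Pch_rec (hN : 3 ≤ N) (n : ℕ) :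
    Pch φ (n+2) = umeMatrix N φ * Pch φ (n+1) - ((N:ℂ) - 2) • Pch φ n := by
  have hc : ((n+2 : ℕ) : ℤ) = ((n : ℤ) + 2) := by push_cast; ring
  have hc1 : ((n+1 : ℕ) : ℤ) = ((n : ℤ) + 1) := by push_cast; ring
  rw [Pch, Pch, Pch, hc, hc1, Polynomial.Chebyshev.T_add_two, map_sub, _root_.map_mul, _root_.map_mul,
    Polynomial.aeval_X]
  set W := scaledUme N φ with hW
  set P1 := Polynomial.aeval W (Polynomial.Chebyshev.T ℂ ((n:ℤ)+1)) with hP1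
  set P0 := Polynomial.aeval W (Polynomial.Chebyshev.T ℂ (n:ℤ)) with hP0
  have h2 : (Polynomial.aeval W) (2 : Polynomial ℂ) = (2 : Matrix (Fin N) (Fin N) ℂ) :=
    map_ofNat _ 2
  rw [h2]
  have h3 : (2 : Matrix (Fin N) (Fin N) ℂ) * W * P1 = (2:ℂ) • (W * P1) := by
    rw [two_mul, two_smul, Matrix.add_mul]
  have hM : umeMatrix N φ * ((2 * sC N ^ (n+1)) • P1) =
      ((2 * sC N ^ (n+1)) * (2 * sC N)) • (W * P1) := by
    rw [mul_smul_comm, M_eq φ hN, smul_mul_assoc, smul_smul]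
  rw [smul_sub, h3, hM, smul_smul]
  congr 1
  · congr 1
    ring
  · rw [smul_smul]
    congr 1
    rw [pow_add, sC_sq hN]
    ring

lemma A_eq_Pch (hN : 3 ≤ N) : ∀ n, A φ (n+2) - ((N:ℂ) - 2) • A φ n = Pch φ (n+2) := by
  intro n
  induction n using Nat.twoStepInduction with
  | zero =>
    rw [Pch_rec φ hN 0, Pch_one φ hN, Pch_zero, A_rec]
    simp only [A]
    module
  | one =>
    rw [Pch_rec φ hN 1, Pch_rec φ hN 0, Pch_one φ hN, Pch_zero, A_rec, A_rec]
    simp only [A]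
    simp only [Matrix.mul_sub, mul_smul_comm, Matrix.mul_one, smul_smul]
    module
  | more n ih1 ih2 =>
    rw [Pch_rec φ hN (n+2), ← ih2, ← ih1]
    rw [A_rec φ (n+2), Matrix.mul_sub, mul_smul_comm,
      show umeMatrix N φ * A φ (n+1) = A φ (n+2) + ((N:ℂ) - 2) • A φ n from by
        rw [A_rec φ n]; abel]
    module

lemma chebTrace_one : chebTrace N φ 1 = 0 := by
  rw [chebTrace]
  simp only [Nat.cast_one, Polynomial.Chebyshev.T_one, Polynomial.aeval_X, scaledUme,
    Matrix.trace_smul, trace_umeMatrix, smul_zero]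

end HashProof

open HashProof

/-- for `N ≥ 3`, any antisymmetric phases and every `n ≥ 1`,
`y_n(Φ) = (2/N)·Tr[T_n(W)] + ((N−3)/2)·(1+(−1)^n)/(N−2)^{n/2}`, where
`y_n(Φ) = Tr[Y(Φ)^n]/(N(N−2)^{n/2})` and `W = M/(2√(N−2))`. -/
theorem hashimoto_chebyshev_trace (N : ℕ) (hN : 3 ≤ N) (φ : Fin N → Fin N → ℝ)
    (hφ : ∀ μ ν, φ ν μ = - φ μ ν) (n : ℕ) (hn : 1 ≤ n) :
    Matrix.trace ((hashimoto N φ) ^ n) / ((N : ℂ) * ((Real.sqrt ((N : ℝ) - 2) : ℂ)) ^ n)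
      = 2 / (N : ℂ) * chebTrace N φ n
        + ((N : ℂ) - 3) / 2 * (1 + (-1 : ℂ) ^ n) / ((Real.sqrt ((N : ℝ) - 2) : ℂ)) ^ n := by
  have hsC : ((Real.sqrt ((N : ℝ) - 2) : ℝ) : ℂ) = sC N := rfl
  have hsne : sC N ≠ 0 := sC_ne hN
  have hNne : (N : ℂ) ≠ 0 := Nat.cast_ne_zero.mpr (by omega)
  rw [trace_hash_pow, hsC]
  obtain ⟨m, rfl⟩ : ∃ m, n = m + 1 := ⟨n - 1, by omega⟩
  cases m with
  | zero =>
    rw [trace_Bm_one, chebTrace_one]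
    norm_num
  | succ k =>
    rw [(main_ind φ hφ k).1]
    have h1 : Matrix.trace (A φ (k+2)) - ((N:ℂ) - 2) * Matrix.trace (A φ k) =
        2 * sC N ^ (k+2) * chebTrace N φ (k+2) := by
      have h2 : ((N:ℂ) - 2) * Matrix.trace (A φ k) =
          Matrix.trace (((N:ℂ) - 2) • A φ k) := by
        rw [Matrix.trace_smul, smul_eq_mul]
      rw [h2, ← Matrix.trace_sub, A_eq_Pch φ hN k, trace_Pch]
    rw [h1]
    have hcc : cc N (k+2) = (N:ℂ) * (((N:ℂ) - 3)/2 * (1 + (-1:ℂ)^(k+2))) := by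
      rcases Nat.even_or_odd (k+2) with h | h
      · rw [cc, if_pos h, h.neg_one_pow]
        ring
      · rw [cc, if_neg (Nat.not_even_iff_odd.mpr h), h.neg_one_pow]
        ring
    rw [hcc]
    field_simp
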